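/- There exist a finite topological space B, sheaves of types F and G on B, and a point b ∈ B such that Supp F = Supp G (so that interior(Supp G ∪ (B ∖ Supp F)) = B), yet no open neighborhood U of b admits a presheaf morphism F|_U → G|_U; hence Supp Hom(F,G) ≠ B, and the inclusion Supp Hom(F,G) ⊆ interior(Supp G ∪ (B ∖ Supp F)) can be strict. -/

import Mathlib

open TopologicalSpace

/-- A presheaf of types on a topological space `B`. -/
structure Psh (B : Type) [TopologicalSpace B] where
  obj : Opens B → Type
  res : ∀ {U V : Opens B}, V ≤ U → obj U → obj V
  res_id : ∀ (U : Opens B) (x : obj U), res le_rfl x = x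
  res_comp : ∀ {U V W : Opens B} (hWV : W ≤ V) (hVU : V ≤ U) (x : obj U),
    res hWV (res hVU x) = res (hWV.trans hVU) x

namespace Psh

variable {B : Type} [TopologicalSpace B]

/-- The sheaf conditions: separation and gluing for arbitrary open covers. -/
def IsSheaf (F : Psh B) : Prop :=
  ∀ {ι : Type} (U : Opens B) (V : ι → Opens B) (hV : ∀ i, V i ≤ U),
    (∀ x ∈ U, ∃ i, x ∈ V i) →
    (∀ s t : F.obj U, (∀ i, F.res (hV i) s = F.res (hV i) t) → s = t) ∧
    ∀ sf : ∀ i, F.obj (V i),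
      (∀ i j, F.res (inf_le_left : V i ⊓ V j ≤ V i) (sf i)
            = F.res (inf_le_right : V i ⊓ V j ≤ V j) (sf j)) →
      ∃ s : F.obj U, ∀ i, F.res (hV i) s = sf i

/-- The support of a presheaf: the union of all open sets with nonempty sections. -/
def supp (F : Psh B) : Set B := {b | ∃ U : Opens B, b ∈ U ∧ Nonempty (F.obj U)}

/-- The germ relation at a point. -/
def stalkRel (F : Psh B) (b : B) :
    (Σ U : {U : Opens B // b ∈ U}, F.obj U.1) →
      (Σ U : {U : Opens B // b ∈ U}, F.obj U.1) → Prop :=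
  fun x y => ∃ (W : Opens B) (_ : b ∈ W) (h1 : W ≤ x.1.1) (h2 : W ≤ y.1.1),
    F.res h1 x.2 = F.res h2 y.2

/-- The stalk of a presheaf at a point: the set of germs, i.e. the colimit of
sections over open neighborhoods of the point. -/
def stalk (F : Psh B) (b : B) : Type := Quot (F.stalkRel b)

/-- The germ of a section at a point. -/
def germ (F : Psh B) {b : B} {U : Opens B} (hb : b ∈ U) (s : F.obj U) : F.stalk b :=
  Quot.mk _ ⟨⟨U, hb⟩, s⟩

/-- A morphism of presheaves `F|_U → G|_U` (restricted to opens contained in `U`). -/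
structure Hom (F G : Psh B) (U : Opens B) where
  app : ∀ (V : Opens B), V ≤ U → F.obj V → G.obj V
  natural : ∀ {V W : Opens B} (hVU : V ≤ U) (hWV : W ≤ V) (s : F.obj V),
    G.res hWV (app V hVU s) = app W (hWV.trans hVU) (F.res hWV s)

/-- The Hom-presheaf `U ↦ {presheaf morphisms F|_U → G|_U}`. -/
def homPsh (F G : Psh B) : Psh B where
  obj U := Hom F G U
  res {U V} h φ :=
    { app := fun W hW => φ.app W (hW.trans h)
      natural := fun hVU hWV s => φ.natural _ hWV s }
  res_id := fun U φ => rfl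
  res_comp := fun _ _ _ => rfl

/-- Objectwise binary product of presheaves. -/
def prodObj (F G : Psh B) : Psh B where
  obj U := F.obj U × G.obj U
  res h x := (F.res h x.1, G.res h x.2)
  res_id U x := by (try dsimp only); rw [F.res_id, G.res_id]
  res_comp h1 h2 x := by dsimp only; rw [F.res_comp, G.res_comp]

/-- Objectwise binary coproduct of presheaves. -/
def sumObj (F G : Psh B) : Psh B where
  obj U := F.obj U ⊕ G.obj U
  res h x := x.elim (fun a => Sum.inl (F.res h a)) (fun c => Sum.inr (G.res h c))
  res_id U x := by
    cases x with
    | inl a => simp only [Sum.elim_inl]; rw [F.res_id]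
    | inr c => simp only [Sum.elim_inr]; rw [G.res_id]
  res_comp h1 h2 x := by
    cases x with
    | inl a => simp only [Sum.elim_inl]; rw [F.res_comp]
    | inr c => simp only [Sum.elim_inr]; rw [G.res_comp]

/-- Objectwise product of a family of presheaves. -/
def piObj {ι : Type} (F : ι → Psh B) : Psh B where
  obj U := ∀ i, (F i).obj U
  res h x i := (F i).res h (x i)
  res_id U x := by funext i; exact (F i).res_id U (x i)
  res_comp h1 h2 x := by funext i; exact (F i).res_comp h1 h2 (x i)

/-- Objectwise coproduct (disjoint union) of a family of presheaves. -/
def sigmaObj {ι : Type} (F : ι → Psh B) : Psh B where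
  obj U := Σ i, (F i).obj U
  res h x := ⟨x.1, (F x.1).res h x.2⟩
  res_id U x := by
    rcases x with ⟨i, s⟩
    exact congrArg (Sigma.mk i) ((F i).res_id U s)
  res_comp h1 h2 x := by
    rcases x with ⟨i, s⟩
    exact congrArg (Sigma.mk i) ((F i).res_comp h1 h2 s)

/-- The characteristic presheaf of an open set: a one-element type on opens
contained in `W`, the empty type elsewhere. -/
def char (W : Opens B) : Psh B where
  obj U := PLift (U ≤ W)
  res h x := ⟨h.trans x.down⟩
  res_id U x := rfl
  res_comp _ _ _ := rfl

/-- An isomorphism of presheaves. -/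
structure Iso (F G : Psh B) where
  hom : ∀ U, F.obj U ≃ G.obj U
  natural : ∀ {U V : Opens B} (h : V ≤ U) (s : F.obj U),
    G.res h (hom U s) = hom V (F.res h s)

end Psh

section Example15

inductive Pt : Type
  | w | a | b | t
deriving DecidableEq

instance : Fintype Pt :=
  ⟨⟨{Pt.w, Pt.a, Pt.b, Pt.t}, by decide⟩, by intro x; cases x <;> decide⟩

open Pt

instance ptTop : TopologicalSpace Pt where
  IsOpen U := (a ∈ U → w ∈ U) ∧ (b ∈ U → w ∈ U) ∧ (t ∈ U → ∀ x, x ∈ U)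
  isOpen_univ := ⟨fun _ => trivial, fun _ => trivial, fun _ _ => trivial⟩
  isOpen_inter := fun U V hU hV =>
    ⟨fun h => ⟨hU.1 h.1, hV.1 h.2⟩, fun h => ⟨hU.2.1 h.1, hV.2.1 h.2⟩,
      fun h x => ⟨hU.2.2 h.1 x, hV.2.2 h.2 x⟩⟩
  isOpen_sUnion := fun S hS => by
    refine ⟨?_, ?_, ?_⟩
    · rintro ⟨s, hs, has⟩; exact ⟨s, hs, (hS s hs).1 has⟩
    · rintro ⟨s, hs, hbs⟩; exact ⟨s, hs, (hS s hs).2.1 hbs⟩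
    · rintro ⟨s, hs, hts⟩ x; exact ⟨s, hs, (hS s hs).2.2 hts x⟩

lemma ptIsOpen_iff (U : Set Pt) :
    IsOpen U ↔ (a ∈ U → w ∈ U) ∧ (b ∈ U → w ∈ U) ∧ (t ∈ U → ∀ x, x ∈ U) := Iff.rfl

/-- the open set {w} -/
def oW : Opens Pt := ⟨{w}, by rw [ptIsOpen_iff]; refine ⟨?_, ?_, ?_⟩ <;> intro h <;> simp_all⟩

/-- the open set {w, a} -/
def oA : Opens Pt := ⟨{w, a}, by rw [ptIsOpen_iff]; refine ⟨?_, ?_, ?_⟩ <;> intro h <;> simp_all⟩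

/-- the open set {w, b} -/
def oB : Opens Pt := ⟨{w, b}, by rw [ptIsOpen_iff]; refine ⟨?_, ?_, ?_⟩ <;> intro h <;> simp_all⟩

/-- the open set {w, a, b} -/
def oV : Opens Pt := ⟨{w, a, b}, by rw [ptIsOpen_iff]; refine ⟨?_, ?_, ?_⟩ <;> intro h <;> simp_all⟩

/-- Our sheaf `F`: the characteristic sheaf of `{w, a, b}`. -/
def Fsh : Psh Pt := Psh.char oV

/-- Our sheaf `G`: Bool-valued sections, forced to be `false` at `w` if `a` is present
and `true` at `w` if `b` is present. -/
def Gsh : Psh Pt where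
  obj U := {s : ∀ x : Pt, x ∈ U → Bool //
    (a ∈ U → ∀ hw : w ∈ U, s w hw = false) ∧ (b ∈ U → ∀ hw : w ∈ U, s w hw = true)}
  res h s := ⟨fun x hx => s.1 x (h hx),
    fun ha hw => s.2.1 (h ha) (h hw), fun hb hw => s.2.2 (h hb) (h hw)⟩
  res_id _ _ := rfl
  res_comp _ _ _ := rfl

lemma char_isSheaf (W : Opens Pt) : (Psh.char W).IsSheaf := by
  intro ι U V hV hcov
  constructor
  · intro s t _
    cases s; cases t; rfl
  · intro sf _
    refine ⟨⟨fun x hx => ?_⟩, fun i => by cases sf i; rfl⟩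
    obtain ⟨i, hi⟩ := hcov x hx
    exact (sf i).down hi

lemma Fsh_isSheaf : Fsh.IsSheaf := char_isSheaf oV

lemma Gsh_isSheaf : Gsh.IsSheaf := by
  intro ι U V hV hcov
  constructor
  · intro s t h
    apply Subtype.ext
    funext x hx
    obtain ⟨i, hi⟩ := hcov x hx
    exact congrFun (congrFun (congrArg Subtype.val (h i)) x) hi
  · intro sf hsf
    -- glue pointwise using choice
    have key : ∀ (x : Pt) (hx : x ∈ U) (i j : ι) (hxi : x ∈ V i) (hxj : x ∈ V j),
        (sf i).1 x hxi = (sf j).1 x hxj := by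
      intro x hx i j hxi hxj
      have hmem : x ∈ V i ⊓ V j := ⟨hxi, hxj⟩
      exact congrFun (congrFun (congrArg Subtype.val (hsf i j)) x) hmem
    have hcov2 := hcov
    choose idx hidx using hcov2
    refine ⟨⟨fun x hx => (sf (idx x hx)).1 x (hidx x hx), ?_, ?_⟩, ?_⟩
    · intro ha hw
      obtain ⟨j, hj⟩ := hcov a ha
      have hwj : w ∈ V j := (V j).isOpen.1 hj
      exact (key w hw (idx w hw) j (hidx w hw) hwj).trans ((sf j).2.1 hj hwj)
    · intro hb hw
      obtain ⟨j, hj⟩ := hcov b hb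
      have hwj : w ∈ V j := (V j).isOpen.2.1 hj
      exact (key w hw (idx w hw) j (hidx w hw) hwj).trans ((sf j).2.2 hj hwj)
    · intro i
      apply Subtype.ext
      funext x hx
      exact key x (hV i hx) (idx x (hV i hx)) i (hidx x (hV i hx)) hx

lemma Gsh_empty_of_t {U : Opens Pt} (ht : t ∈ U) : IsEmpty (Gsh.obj U) := by
  have hall : ∀ x, x ∈ U := U.isOpen.2.2 ht
  refine ⟨fun s => ?_⟩
  have h1 := s.2.1 (hall a) (hall w)
  have h2 := s.2.2 (hall b) (hall w)
  rw [h1] at h2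
  exact Bool.noConfusion h2

lemma Fsh_supp : Fsh.supp = ({w, a, b} : Set Pt) := by
  ext x
  constructor
  · rintro ⟨U, hxU, ⟨s⟩⟩
    exact s.down hxU
  · intro hx
    exact ⟨oV, hx, ⟨⟨le_rfl⟩⟩⟩

lemma Gsh_supp : Gsh.supp = ({w, a, b} : Set Pt) := by
  ext x
  constructor
  · rintro ⟨U, hxU, ⟨s⟩⟩
    cases x with
    | w => simp
    | a => simp
    | b => simp
    | t => exact ((Gsh_empty_of_t hxU).false s).elim
  · intro hx
    rcases hx with hx | hx | hx
    · subst hx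
      exact ⟨oW, by simp [oW], ⟨⟨fun _ _ => false, by intro h; simp [oW] at h,
        by intro h; simp [oW] at h⟩⟩⟩
    · subst hx
      exact ⟨oA, by simp [oA], ⟨⟨fun _ _ => false, fun _ _ => rfl,
        by intro h; simp [oA] at h⟩⟩⟩
    · subst hx
      exact ⟨oB, by simp [oB], ⟨⟨fun _ _ => true, by intro h; simp [oB] at h,
        fun _ _ => rfl⟩⟩⟩

lemma hom_empty (U : Opens Pt) (ht : t ∈ U) : IsEmpty (Psh.Hom Fsh Gsh U) := by
  have hall : ∀ x, x ∈ U := U.isOpen.2.2 ht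
  refine ⟨fun φ => ?_⟩
  have hAU : oA ≤ U := fun x _ => hall x
  have hBU : oB ≤ U := fun x _ => hall x
  have hWA : oW ≤ oA := by intro x hx; simp [oW] at hx; simp [oA, hx]
  have hWB : oW ≤ oB := by intro x hx; simp [oW] at hx; simp [oB, hx]
  have hVle : oV ≤ oV := le_rfl
  have uA : Fsh.obj oA := ⟨by intro x hx; simp [oA] at hx; rcases hx with h | h <;> simp [oV, h]⟩
  have uB : Fsh.obj oB := ⟨by intro x hx; simp [oB] at hx; rcases hx with h | h <;> simp [oV, h]⟩
  have uW : Fsh.obj oW := ⟨by intro x hx; simp [oW] at hx; simp [oV, hx]⟩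
  have hwW : w ∈ oW := by simp [oW]
  have haA : a ∈ oA := by simp [oA]
  have hbB : b ∈ oB := by simp [oB]
  have eA := φ.natural hAU hWA uA
  have eB := φ.natural hBU hWB uB
  have huA : Fsh.res hWA uA = uW := by cases Fsh.res hWA uA; cases uW; rfl
  have huB : Fsh.res hWB uB = uW := by cases Fsh.res hWB uB; cases uW; rfl
  rw [huA] at eA
  rw [huB] at eB
  have hfalse : (φ.app oW (hWA.trans hAU) uW).1 w hwW = false := by
    rw [← eA]
    exact (φ.app oA hAU uA).2.1 haA (hWA hwW)
  have htrue : (φ.app oW (hWB.trans hBU) uW).1 w hwW = true := by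
    rw [← eB]
    exact (φ.app oB hBU uB).2.2 hbB (hWB hwW)
  have : (hWA.trans hAU) = (hWB.trans hBU) := rfl
  rw [this] at hfalse
  rw [hfalse] at htrue
  exact Bool.noConfusion htrue

end Example15

/-- There are a finite space `B`, sheaves `F`, `G` on `B` with `Supp F = Supp G`
(so `interior (Supp G ∪ (B ∖ Supp F)) = B`), and a point `b` such that no
neighborhood of `b` admits a presheaf morphism `F|_U → G|_U`; hence the inclusion
`Supp Hom(F,G) ⊆ interior (Supp G ∪ (B ∖ Supp F))` can be strict. -/
theorem stmt_15 :
    ∃ (B : Type) (_ : TopologicalSpace B) (_ : Finite B) (F G : Psh B) (b : B),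
      F.IsSheaf ∧ G.IsSheaf ∧ F.supp = G.supp ∧
      (∀ U : Opens B, b ∈ U → IsEmpty (Psh.Hom F G U)) ∧
      interior (G.supp ∪ F.suppᶜ) = Set.univ ∧
      (Psh.homPsh F G).supp ≠ interior (G.supp ∪ F.suppᶜ) := by
  have hsupp : Fsh.supp = Gsh.supp := by rw [Fsh_supp, Gsh_supp]
  have hint : interior (Gsh.supp ∪ Fsh.suppᶜ) = Set.univ := by
    rw [← hsupp, Set.union_compl_self, interior_univ]
  refine ⟨Pt, ptTop, Finite.of_fintype Pt, Fsh, Gsh, Pt.t, Fsh_isSheaf, Gsh_isSheaf,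
    hsupp, hom_empty, hint, ?_⟩
  rw [hint]
  intro h
  have : Pt.t ∈ (Psh.homPsh Fsh Gsh).supp := h ▸ Set.mem_univ Pt.t
  obtain ⟨U, htU, ⟨φ⟩⟩ := this
  exact (hom_empty U htU).false φ
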